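/- Fix reals i, j > 0 with i + j = 1 and let x ∈ Bad(i,j). Then for every strictly positive non-increasing function ψ : ℕ → ℝ with ∑_{r=1}^∞ ψ(r) = ∞, the set W^x_{(i,j)}(ψ) of γ ∈ [0,1]² satisfying max{‖q x₁ − γ₁‖^{1/i}, ‖q x₂ − γ₂‖^{1/j}} ≤ ψ(|q|) for infinitely many nonzero integers q has 2-dimensional Lebesgue measure at least some positive constant (in particular, positive measure). -/

import Mathlib

open MeasureTheory Set Filter
open scoped ENNReal

/-- Distance to the nearest integer. -/
noncomputable def nint (y : ℝ) : ℝ := |y - (round y : ℝ)|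

/-- `pw y e = y ^ (1/e)`, with the convention that `y ^ (1/0) = 0`. -/
noncomputable def pw (y e : ℝ) : ℝ := if e = 0 then 0 else y ^ (1 / e)

/-- A vector is irrational if `1, x₁, x₂` are linearly independent over `ℚ`. -/
def IrrVec (x : ℝ × ℝ) : Prop :=
  ∀ a b c : ℤ, (a : ℝ) * x.1 + (b : ℝ) * x.2 + (c : ℝ) = 0 → a = 0 ∧ b = 0 ∧ c = 0

/-- The set `Bad(i,j)` of `(i,j)`-badly approximable vectors. -/
def Badij (i j : ℝ) (x : ℝ × ℝ) : Prop :=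
  IrrVec x ∧ ∃ c > (0 : ℝ), ∀ q : ℕ, 0 < q →
    max (pw (nint (q * x.1)) i) (pw (nint (q * x.2)) j) > c / q

/-- The twisted well-approximable set `W^x_{(i,j)}(ψ)`. -/
def twistedW (x : ℝ × ℝ) (i j : ℝ) (ψ : ℕ → ℝ) : Set (ℝ × ℝ) :=
  {γ ∈ Set.Icc (0 : ℝ × ℝ) 1 |
    {q : ℤ | q ≠ 0 ∧
      max (pw (nint (q * x.1 - γ.1)) i) (pw (nint (q * x.2 - γ.2)) j)
        ≤ ψ q.natAbs}.Infinite}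


instance fact01 : Fact ((0:ℝ) < 1) := ⟨zero_lt_one⟩

lemma nint_eq_norm (y : ℝ) : nint y = ‖(y : UnitAddCircle)‖ := by
  rw [UnitAddCircle.norm_eq, nint]

lemma nint_nonneg (y : ℝ) : 0 ≤ nint y := abs_nonneg _

noncomputable def Bset (x : ℝ × ℝ) (i j : ℝ) (ψ : ℕ → ℝ) (q : ℕ) :
    Set (UnitAddCircle × UnitAddCircle) :=
  Metric.closedBall ((q * x.1 : ℝ) : UnitAddCircle) (ψ q ^ i) ×ˢ
    Metric.closedBall ((q * x.2 : ℝ) : UnitAddCircle) (ψ q ^ j)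

lemma Bset_meas (x : ℝ × ℝ) (i j : ℝ) (ψ : ℕ → ℝ) (q : ℕ) :
    MeasurableSet (Bset x i j ψ q) :=
  (Metric.isClosed_closedBall.measurableSet).prod (Metric.isClosed_closedBall.measurableSet)

lemma Bset_vol (x : ℝ × ℝ) (i j : ℝ) (ψ : ℕ → ℝ) (q : ℕ) :
    volume (Bset x i j ψ q) =
      ENNReal.ofReal (min 1 (2 * ψ q ^ i)) * ENNReal.ofReal (min 1 (2 * ψ q ^ j)) := by
  rw [Bset, Measure.volume_eq_prod, Measure.prod_prod, AddCircle.volume_closedBall,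
    AddCircle.volume_closedBall]

lemma Bset_vol_le (x : ℝ × ℝ) {i j : ℝ} (hi : 0 < i) (hj : 0 < j) (hij : i + j = 1)
    {ψ : ℕ → ℝ} (hψpos : ∀ r, 0 < ψ r) (q : ℕ) :
    volume (Bset x i j ψ q) ≤ ENNReal.ofReal (4 * ψ q) := by
  have hri : (0:ℝ) ≤ ψ q ^ i := Real.rpow_nonneg (hψpos q).le i
  have hrj : (0:ℝ) ≤ ψ q ^ j := Real.rpow_nonneg (hψpos q).le j
  rw [Bset_vol, ← ENNReal.ofReal_mul (le_min zero_le_one (by linarith))]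
  apply ENNReal.ofReal_le_ofReal
  have h1 : min 1 (2 * ψ q ^ i) ≤ 2 * ψ q ^ i := min_le_right _ _
  have h2 : min 1 (2 * ψ q ^ j) ≤ 2 * ψ q ^ j := min_le_right _ _
  calc min 1 (2 * ψ q ^ i) * min 1 (2 * ψ q ^ j) ≤ (2 * ψ q ^ i) * (2 * ψ q ^ j) := by
        apply mul_le_mul h1 h2 (le_min zero_le_one (by linarith)) (by linarith)
  _ = 4 * (ψ q ^ i * ψ q ^ j) := by ring
  _ = 4 * ψ q := by rw [← Real.rpow_add (hψpos q), hij, Real.rpow_one]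

lemma Bset_vol_ge (x : ℝ × ℝ) {i j : ℝ} (hi : 0 < i) (hj : 0 < j) (hij : i + j = 1)
    {ψ : ℕ → ℝ} (hψpos : ∀ r, 0 < ψ r) (hψ1 : ∀ r, ψ r ≤ 1) (q : ℕ) :
    ENNReal.ofReal (ψ q) ≤ volume (Bset x i j ψ q) := by
  have hri : (0:ℝ) ≤ ψ q ^ i := Real.rpow_nonneg (hψpos q).le i
  have hrj : (0:ℝ) ≤ ψ q ^ j := Real.rpow_nonneg (hψpos q).le j
  rw [Bset_vol, ← ENNReal.ofReal_mul (le_min zero_le_one (by linarith))]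
  apply ENNReal.ofReal_le_ofReal
  have hi1 : ψ q ^ i ≤ 1 := Real.rpow_le_one (hψpos q).le (hψ1 q) hi.le
  have hj1 : ψ q ^ j ≤ 1 := Real.rpow_le_one (hψpos q).le (hψ1 q) hj.le
  have h1 : ψ q ^ i ≤ min 1 (2 * ψ q ^ i) := le_min hi1 (by linarith)
  have h2 : ψ q ^ j ≤ min 1 (2 * ψ q ^ j) := le_min hj1 (by linarith)
  calc ψ q = ψ q ^ i * ψ q ^ j := by rw [← Real.rpow_add (hψpos q), hij, Real.rpow_one]
  _ ≤ min 1 (2 * ψ q ^ i) * min 1 (2 * ψ q ^ j) := by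
      apply mul_le_mul h1 h2 hrj (le_min zero_le_one (by linarith))

noncomputable def Aconst (i j : ℝ) : ℝ := max ((4:ℝ) ^ (1/i)) ((4:ℝ) ^ (1/j))

lemma Aconst_pos {i j : ℝ} (hi : 0 < i) (hj : 0 < j) : 0 < Aconst i j :=
  lt_max_of_lt_left (Real.rpow_pos_of_pos (by norm_num) _)

lemma rpow_quarter {e y : ℝ} (he : 0 < e) (hy : 0 ≤ y) {d : ℝ} (hle : y ≤ 4 * d ^ e)
    (hd : 0 ≤ d) : y ^ (1/e) ≤ (4:ℝ) ^ (1/e) * d := by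
  have h4 : (0:ℝ) ≤ 4 := by norm_num
  calc y ^ (1/e) ≤ (4 * d ^ e) ^ (1/e) :=
        Real.rpow_le_rpow hy hle (by positivity)
  _ = (4:ℝ) ^ (1/e) * (d ^ e) ^ (1/e) := Real.mul_rpow h4 (Real.rpow_nonneg hd e)
  _ = (4:ℝ) ^ (1/e) * d := by
      rw [← Real.rpow_mul hd, mul_one_div_cancel he.ne', Real.rpow_one]

lemma sep {i j : ℝ} (hi : 0 < i) (hj : 0 < j) {x : ℝ × ℝ} {c : ℝ} (hc : 0 < c)
    (hbad : ∀ q : ℕ, 0 < q →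
      c / q < max (pw (nint (q * x.1)) i) (pw (nint (q * x.2)) j))
    {ψ : ℕ → ℝ} (hψpos : ∀ r, 0 < ψ r) (q : ℕ) {t : ℕ} (ht : 0 < t)
    (h1 : nint (t * x.1) ≤ 4 * ψ q ^ i) (h2 : nint (t * x.2) ≤ 4 * ψ q ^ j) :
    c / (Aconst i j * ψ q) < t := by
  have hA := Aconst_pos hi hj
  have hAψ : 0 < Aconst i j * ψ q := mul_pos hA (hψpos q)
  have key : c / t < Aconst i j * ψ q := by
    rcases max_cases (pw (nint (t * x.1)) i) (pw (nint (t * x.2)) j) with ⟨heq, _⟩ | ⟨heq, _⟩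
    · have := hbad t ht
      rw [heq] at this
      rw [pw, if_neg hi.ne'] at this
      calc c / t < nint (t * x.1) ^ (1/i) := this
      _ ≤ (4:ℝ) ^ (1/i) * ψ q := rpow_quarter hi (nint_nonneg _) h1 (hψpos q).le
      _ ≤ Aconst i j * ψ q := by
          apply mul_le_mul_of_nonneg_right (le_max_left _ _) (hψpos q).le
    · have := hbad t ht
      rw [heq] at this
      rw [pw, if_neg hj.ne'] at this
      calc c / t < nint (t * x.2) ^ (1/j) := this
      _ ≤ (4:ℝ) ^ (1/j) * ψ q := rpow_quarter hj (nint_nonneg _) h2 (hψpos q).le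
      _ ≤ Aconst i j * ψ q := by
          apply mul_le_mul_of_nonneg_right (le_max_right _ _) (hψpos q).le
  have htpos : (0:ℝ) < t := by exact_mod_cast ht
  rw [div_lt_iff₀ htpos] at key
  rw [div_lt_iff₀ hAψ]
  linarith [key]

lemma nint_diff_le {y₁ y₂ : ℝ} {a b : ℝ} {t s : ℕ} (hts : t < s)
    (h1 : nint (t * y₁) ≤ a) (h2 : nint (s * y₁) ≤ b) :
    nint (((s - t : ℕ) : ℝ) * y₁) ≤ a + b := by
  have hcast : ((s - t : ℕ) : ℝ) = (s:ℝ) - t := by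
    rw [Nat.cast_sub hts.le]
  rw [nint_eq_norm] at h1 h2 ⊢
  rw [hcast, sub_mul]
  have : ((s * y₁ - t * y₁ : ℝ) : UnitAddCircle) = ((s * y₁ : ℝ) : UnitAddCircle) -
      ((t * y₁ : ℝ) : UnitAddCircle) := AddCircle.coe_sub _ _ _
  rw [this]
  calc ‖((s * y₁ : ℝ) : UnitAddCircle) - ((t * y₁ : ℝ) : UnitAddCircle)‖
      ≤ ‖((s * y₁ : ℝ) : UnitAddCircle)‖ + ‖((t * y₁ : ℝ) : UnitAddCircle)‖ := norm_sub_le _ _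
  _ ≤ a + b := by rw [add_comm a b]; exact add_le_add h2 h1

lemma overlap {x : ℝ × ℝ} {i j : ℝ} (hi : 0 < i) (hj : 0 < j) {ψ : ℕ → ℝ}
    (hψpos : ∀ r, 0 < ψ r) (hψmono : Antitone ψ) {q s : ℕ} (hqs : q < s)
    (hne : (Bset x i j ψ q ∩ Bset x i j ψ s).Nonempty) :
    nint (((s - q : ℕ) : ℝ) * x.1) ≤ 2 * ψ q ^ i ∧
      nint (((s - q : ℕ) : ℝ) * x.2) ≤ 2 * ψ q ^ j := by
  obtain ⟨z, hzq, hzs⟩ := hne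
  rw [Bset, Set.mem_prod] at hzq hzs
  have hkey : ∀ (y : ℝ) (e : ℝ), 0 < e →
      z.1 ∈ Metric.closedBall ((q * y : ℝ) : UnitAddCircle) (ψ q ^ e) →
      z.1 ∈ Metric.closedBall ((s * y : ℝ) : UnitAddCircle) (ψ s ^ e) →
      nint (((s - q : ℕ) : ℝ) * y) ≤ 2 * ψ q ^ e := by
    intro y e he h1 h2
    have hcast : ((s - q : ℕ) : ℝ) = (s:ℝ) - q := Nat.cast_sub hqs.le
    rw [nint_eq_norm, hcast, sub_mul]
    have hco : ((s * y - q * y : ℝ) : UnitAddCircle) = ((s * y : ℝ) : UnitAddCircle) -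
        ((q * y : ℝ) : UnitAddCircle) := AddCircle.coe_sub _ _ _
    rw [hco, ← dist_eq_norm]
    have hmono : ψ s ^ e ≤ ψ q ^ e :=
      Real.rpow_le_rpow (hψpos s).le (hψmono hqs.le) he.le
    calc dist ((s * y : ℝ) : UnitAddCircle) ((q * y : ℝ) : UnitAddCircle)
        ≤ dist ((s * y : ℝ) : UnitAddCircle) z.1 + dist z.1 ((q * y : ℝ) : UnitAddCircle) :=
          dist_triangle _ _ _
    _ ≤ ψ s ^ e + ψ q ^ e := by
        apply add_le_add
        · rw [dist_comm]; exact Metric.mem_closedBall.1 h2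
        · exact Metric.mem_closedBall.1 h1
    _ ≤ 2 * ψ q ^ e := by linarith
  have hkey2 : ∀ (y : ℝ) (e : ℝ), 0 < e →
      z.2 ∈ Metric.closedBall ((q * y : ℝ) : UnitAddCircle) (ψ q ^ e) →
      z.2 ∈ Metric.closedBall ((s * y : ℝ) : UnitAddCircle) (ψ s ^ e) →
      nint (((s - q : ℕ) : ℝ) * y) ≤ 2 * ψ q ^ e := by
    intro y e he h1 h2
    have hcast : ((s - q : ℕ) : ℝ) = (s:ℝ) - q := Nat.cast_sub hqs.le
    rw [nint_eq_norm, hcast, sub_mul]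
    have hco : ((s * y - q * y : ℝ) : UnitAddCircle) = ((s * y : ℝ) : UnitAddCircle) -
        ((q * y : ℝ) : UnitAddCircle) := AddCircle.coe_sub _ _ _
    rw [hco, ← dist_eq_norm]
    have hmono : ψ s ^ e ≤ ψ q ^ e :=
      Real.rpow_le_rpow (hψpos s).le (hψmono hqs.le) he.le
    calc dist ((s * y : ℝ) : UnitAddCircle) ((q * y : ℝ) : UnitAddCircle)
        ≤ dist ((s * y : ℝ) : UnitAddCircle) z.2 + dist z.2 ((q * y : ℝ) : UnitAddCircle) :=
          dist_triangle _ _ _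
    _ ≤ ψ s ^ e + ψ q ^ e := by
        apply add_le_add
        · rw [dist_comm]; exact Metric.mem_closedBall.1 h2
        · exact Metric.mem_closedBall.1 h1
    _ ≤ 2 * ψ q ^ e := by linarith
  exact ⟨hkey x.1 i hi hzq.1 hzs.1, hkey2 x.2 j hj hzq.2 hzs.2⟩

lemma sparse_sum0 {ψ : ℕ → ℝ} (hpos : ∀ r, 0 ≤ ψ r) (hmono : Antitone ψ) {g : ℝ} (hg : 0 < g)
    {M : ℕ} {F : Finset ℕ} (hF : F ⊆ Finset.Icc 1 M)
    (hgap1 : ∀ t ∈ F, g < (t:ℝ))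
    (hgap2 : ∀ t ∈ F, ∀ t' ∈ F, t < t' → g < (t' : ℝ) - (t:ℝ)) :
    ∑ t ∈ F, ψ t ≤ (2/g) * ∑ r ∈ Finset.Icc 1 M, ψ r := by
  classical
  have hSig : (0:ℝ) ≤ ∑ r ∈ Finset.Icc 1 M, ψ r := Finset.sum_nonneg fun r _ => hpos r
  have hsub : ∑ t ∈ F, ψ t ≤ ∑ r ∈ Finset.Icc 1 M, ψ r :=
    Finset.sum_le_sum_of_subset_of_nonneg hF (fun r _ _ => hpos r)
  rcases le_or_gt g 1 with hg1 | hg1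
  · calc ∑ t ∈ F, ψ t ≤ ∑ r ∈ Finset.Icc 1 M, ψ r := hsub
    _ = 1 * ∑ r ∈ Finset.Icc 1 M, ψ r := (one_mul _).symm
    _ ≤ (2/g) * ∑ r ∈ Finset.Icc 1 M, ψ r := by
        apply mul_le_mul_of_nonneg_right _ hSig
        rw [le_div_iff₀ hg]; linarith
  · set n : ℕ := ⌊g⌋₊ with hn
    have hn1 : 1 ≤ n := Nat.le_floor (by exact_mod_cast hg1.le)
    have hng : (n:ℝ) ≤ g := Nat.floor_le hg.le
    have hgn1 : g < (n:ℝ) + 1 := by exact_mod_cast Nat.lt_floor_add_one g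
    have htn : ∀ t ∈ F, n + 1 ≤ t := by
      intro t ht
      have : (n:ℝ) < (t:ℝ) := lt_of_le_of_lt hng (hgap1 t ht)
      exact_mod_cast Nat.add_one_le_iff.2 (by exact_mod_cast this)
    -- blocks
    set B : ℕ → Finset ℕ := fun t => Finset.Icc (t - n + 1) t with hB
    have hcard : ∀ t ∈ F, (B t).card = n := by
      intro t ht
      rw [hB]
      simp only [Nat.card_Icc]
      have := htn t ht
      omega
    have hdisj : (F : Set ℕ).PairwiseDisjoint B := by
      have main : ∀ t ∈ F, ∀ t' ∈ F, t < t' → Disjoint (B t) (B t') := by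
        intro t ht t' ht' hlt
        have hgap := hgap2 t ht t' ht' hlt
        have htt' : t + n < t' := by
          have : (t:ℝ) + n < t' := by linarith
          exact_mod_cast this
        rw [Finset.disjoint_left]
        intro a ha ha'
        simp only [hB, Finset.mem_Icc] at ha ha'
        omega
      intro t ht t' ht' hne
      simp only [Finset.mem_coe] at ht ht'
      simp only [Function.onFun]
      rcases lt_or_gt_of_ne hne with h | h
      · exact main t ht t' ht' h
      · exact (main t' ht' t ht h).symm
    have hsubB : ∀ t ∈ F, B t ⊆ Finset.Icc 1 M := by
      intro t ht
      intro a ha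
      simp only [hB, Finset.mem_Icc] at ha
      have ht' := hF ht
      simp only [Finset.mem_Icc] at ht' ⊢
      omega
    have key : (n:ℝ) * ∑ t ∈ F, ψ t ≤ ∑ r ∈ Finset.Icc 1 M, ψ r := by
      calc (n:ℝ) * ∑ t ∈ F, ψ t = ∑ t ∈ F, (n:ℝ) * ψ t := Finset.mul_sum _ _ _
      _ ≤ ∑ t ∈ F, ∑ r ∈ B t, ψ r := by
          apply Finset.sum_le_sum
          intro t ht
          calc (n:ℝ) * ψ t = ∑ _r ∈ B t, ψ t := by rw [Finset.sum_const, hcard t ht]; ring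
          _ ≤ ∑ r ∈ B t, ψ r := by
              apply Finset.sum_le_sum
              intro r hr
              simp only [hB, Finset.mem_Icc] at hr
              exact hmono hr.2
      _ = ∑ r ∈ F.biUnion B, ψ r := (Finset.sum_biUnion hdisj).symm
      _ ≤ ∑ r ∈ Finset.Icc 1 M, ψ r := by
          apply Finset.sum_le_sum_of_subset_of_nonneg _ (fun r _ _ => hpos r)
          intro a ha
          rw [Finset.mem_biUnion] at ha
          obtain ⟨t, ht, hat⟩ := ha
          exact hsubB t ht hat
    have hnpos : (0:ℝ) < n := by exact_mod_cast hn1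
    rw [div_mul_eq_mul_div, le_div_iff₀ hg]
    calc (∑ t ∈ F, ψ t) * g ≤ (∑ t ∈ F, ψ t) * (2 * n) := by
          apply mul_le_mul_of_nonneg_left _ (Finset.sum_nonneg fun t _ => hpos t)
          have h1n : (1:ℝ) ≤ n := by exact_mod_cast hn1
          linarith
    _ = 2 * ((n:ℝ) * ∑ t ∈ F, ψ t) := by ring
    _ ≤ 2 * ∑ r ∈ Finset.Icc 1 M, ψ r := by linarith [key]

lemma sumq {i j : ℝ} (hi : 0 < i) (hj : 0 < j) (hij : i + j = 1)
    {x : ℝ × ℝ} {c : ℝ} (hc : 0 < c)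
    (hbad : ∀ q : ℕ, 0 < q →
      c / q < max (pw (nint (q * x.1)) i) (pw (nint (q * x.2)) j))
    {ψ : ℕ → ℝ} (hψpos : ∀ r, 0 < ψ r) (hψmono : Antitone ψ)
    (q M : ℕ) :
    ∑ s ∈ Finset.Icc (q+1) M, volume (Bset x i j ψ q ∩ Bset x i j ψ s)
      ≤ ENNReal.ofReal ((8 * Aconst i j / c) * ψ q * ∑ r ∈ Finset.Icc 1 M, ψ r) := by
  classical
  have hA := Aconst_pos hi hj
  set g : ℝ := c / (Aconst i j * ψ q) with hg
  have hgpos : 0 < g := div_pos hc (mul_pos hA (hψpos q))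
  set cond : ℕ → Prop := fun t => nint (t * x.1) ≤ 2 * ψ q ^ i ∧ nint (t * x.2) ≤ 2 * ψ q ^ j
    with hcond
  have hsep : ∀ t : ℕ, 0 < t → cond t → g < (t:ℝ) := by
    intro t ht hct
    have h1 : nint (t * x.1) ≤ 4 * ψ q ^ i := by
      have := Real.rpow_nonneg (hψpos q).le i
      have := hct.1; linarith [hct.1]
    have h2 : nint (t * x.2) ≤ 4 * ψ q ^ j := by
      have := Real.rpow_nonneg (hψpos q).le j
      linarith [hct.2]
    exact sep hi hj hc hbad hψpos q ht h1 h2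
  set F : Finset ℕ := (Finset.Icc 1 M).filter cond with hF
  -- step 1 : per term bound
  have step1 : ∀ s ∈ Finset.Icc (q+1) M,
      volume (Bset x i j ψ q ∩ Bset x i j ψ s) ≤
        if cond (s - q) then ENNReal.ofReal (4 * ψ (s - q)) else 0 := by
    intro s hs
    rw [Finset.mem_Icc] at hs
    by_cases hv : volume (Bset x i j ψ q ∩ Bset x i j ψ s) = 0
    · rw [hv]; exact zero_le
    · have hne := nonempty_of_measure_ne_zero hv
      have hqs : q < s := by omega
      have hc2 := overlap hi hj hψpos hψmono hqs hne
      rw [if_pos hc2]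
      calc volume (Bset x i j ψ q ∩ Bset x i j ψ s) ≤ volume (Bset x i j ψ s) :=
            measure_mono inter_subset_right
      _ ≤ ENNReal.ofReal (4 * ψ s) := Bset_vol_le x hi hj hij hψpos s
      _ ≤ ENNReal.ofReal (4 * ψ (s - q)) := by
          apply ENNReal.ofReal_le_ofReal
          have : ψ s ≤ ψ (s - q) := hψmono (by omega)
          linarith
  have step2 : ∑ s ∈ Finset.Icc (q+1) M, volume (Bset x i j ψ q ∩ Bset x i j ψ s) ≤
      ∑ t ∈ F, ENNReal.ofReal (4 * ψ t) := by
    calc ∑ s ∈ Finset.Icc (q+1) M, volume (Bset x i j ψ q ∩ Bset x i j ψ s)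
        ≤ ∑ s ∈ Finset.Icc (q+1) M,
            (if cond (s - q) then ENNReal.ofReal (4 * ψ (s - q)) else 0) :=
          Finset.sum_le_sum step1
    _ = ∑ t ∈ Finset.Icc 1 (M - q),
            (if cond t then ENNReal.ofReal (4 * ψ t) else 0) := by
        rcases le_or_gt (q+1) M with hM | hM
        · have hmap : Finset.Icc (q+1) M = (Finset.Icc 1 (M - q)).map (addLeftEmbedding q) := by
            rw [Finset.map_add_left_Icc]
            congr 1 <;> omega
          rw [hmap, Finset.sum_map]
          apply Finset.sum_congr rfl
          intro t _
          have : addLeftEmbedding q t - q = t := by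
            simp [addLeftEmbedding]
          rw [this]
        · rw [Finset.Icc_eq_empty (by omega), Finset.Icc_eq_empty (by omega)]
          simp
    _ = ∑ t ∈ (Finset.Icc 1 (M - q)).filter cond, ENNReal.ofReal (4 * ψ t) :=
        (Finset.sum_filter _ _).symm
    _ ≤ ∑ t ∈ F, ENNReal.ofReal (4 * ψ t) := by
        apply Finset.sum_le_sum_of_subset
        apply Finset.filter_subset_filter
        apply Finset.Icc_subset_Icc_right
        omega
  -- apply sparse_sum
  have hsparse : ∑ t ∈ F, ψ t ≤ (2/g) * ∑ r ∈ Finset.Icc 1 M, ψ r := by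
    apply sparse_sum0 (fun r => (hψpos r).le) hψmono hgpos (Finset.filter_subset _ _)
    · intro t ht
      rw [Finset.mem_filter, Finset.mem_Icc] at ht
      exact hsep t (by omega) ht.2
    · intro t ht t' ht' htt'
      rw [Finset.mem_filter, Finset.mem_Icc] at ht ht'
      obtain ⟨⟨ht1, _⟩, ha1, ha2⟩ := ht
      obtain ⟨_, hb1, hb2⟩ := ht'
      have hd1 : nint (((t' - t : ℕ) : ℝ) * x.1) ≤ 4 * ψ q ^ i := by
        have := nint_diff_le (y₁ := x.1) (y₂ := x.2) htt' ha1 hb1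
        linarith
      have hd2 : nint (((t' - t : ℕ) : ℝ) * x.2) ≤ 4 * ψ q ^ j := by
        have := nint_diff_le (y₁ := x.2) (y₂ := x.1) htt' ha2 hb2
        linarith
      have := sep hi hj hc hbad hψpos q (t := t' - t) (by omega) hd1 hd2
      have hcast : ((t' - t : ℕ) : ℝ) = (t' : ℝ) - t := Nat.cast_sub htt'.le
      rw [hcast] at this
      exact this
  calc ∑ s ∈ Finset.Icc (q+1) M, volume (Bset x i j ψ q ∩ Bset x i j ψ s)
      ≤ ∑ t ∈ F, ENNReal.ofReal (4 * ψ t) := step2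
  _ = ENNReal.ofReal (∑ t ∈ F, 4 * ψ t) := by
      rw [ENNReal.ofReal_sum_of_nonneg]
      intro t _
      have := (hψpos t).le
      linarith
  _ ≤ ENNReal.ofReal ((8 * Aconst i j / c) * ψ q * ∑ r ∈ Finset.Icc 1 M, ψ r) := by
      apply ENNReal.ofReal_le_ofReal
      rw [← Finset.mul_sum]
      calc 4 * ∑ t ∈ F, ψ t ≤ 4 * ((2/g) * ∑ r ∈ Finset.Icc 1 M, ψ r) := by
            apply mul_le_mul_of_nonneg_left hsparse (by norm_num)
      _ = (8 * Aconst i j / c) * ψ q * ∑ r ∈ Finset.Icc 1 M, ψ r := by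
          rw [hg]
          field_simp
          ring

lemma dsum {i j : ℝ} (hi : 0 < i) (hj : 0 < j) (hij : i + j = 1)
    {x : ℝ × ℝ} {c : ℝ} (hc : 0 < c)
    (hbad : ∀ q : ℕ, 0 < q →
      c / q < max (pw (nint (q * x.1)) i) (pw (nint (q * x.2)) j))
    {ψ : ℕ → ℝ} (hψpos : ∀ r, 0 < ψ r) (hψmono : Antitone ψ)
    (N M : ℕ) :
    ∑ q ∈ Finset.Icc N M, ∑ s ∈ Finset.Icc N M, volume (Bset x i j ψ q ∩ Bset x i j ψ s)
      ≤ ENNReal.ofReal (4 * ∑ r ∈ Finset.Icc N M, ψ r) +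
        ENNReal.ofReal ((16 * Aconst i j / c) * (∑ r ∈ Finset.Icc N M, ψ r) *
          (∑ r ∈ Finset.Icc 1 M, ψ r)) := by
  classical
  set I := Finset.Icc N M with hI
  set v : ℕ → ℕ → ℝ≥0∞ := fun q s => volume (Bset x i j ψ q ∩ Bset x i j ψ s) with hv
  have hsym : ∀ q s, v q s = v s q := by
    intro q s; rw [hv]; simp only; rw [inter_comm]
  have hsplit : ∀ q ∈ I, ∑ s ∈ I, v q s ≤
      v q q + (∑ s ∈ I.filter (fun s => s < q), v q s + ∑ s ∈ Finset.Icc (q+1) M, v q s) := by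
    intro q hq
    rw [← Finset.sum_filter_add_sum_filter_not I (fun s => s < q) (v q)]
    have h2 : ∑ s ∈ I.filter (fun s => ¬ s < q), v q s ≤
        v q q + ∑ s ∈ Finset.Icc (q+1) M, v q s := by
      rw [← Finset.sum_filter_add_sum_filter_not (I.filter (fun s => ¬ s < q))
        (fun s => q < s) (v q)]
      have ha : ∑ s ∈ (I.filter (fun s => ¬ s < q)).filter (fun s => q < s), v q s ≤
          ∑ s ∈ Finset.Icc (q+1) M, v q s := by
        apply Finset.sum_le_sum_of_subset
        intro s hs
        simp only [Finset.mem_filter, Finset.mem_Icc, hI] at hs ⊢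
        omega
      have hb : ∑ s ∈ (I.filter (fun s => ¬ s < q)).filter (fun s => ¬ q < s), v q s ≤
          v q q := by
        have hsub : (I.filter (fun s => ¬ s < q)).filter (fun s => ¬ q < s) ⊆ {q} := by
          intro s hs
          simp only [Finset.mem_filter, Finset.mem_Icc, hI] at hs
          simp only [Finset.mem_singleton]
          omega
        calc ∑ s ∈ (I.filter (fun s => ¬ s < q)).filter (fun s => ¬ q < s), v q s
            ≤ ∑ s ∈ ({q} : Finset ℕ), v q s := Finset.sum_le_sum_of_subset hsub
        _ = v q q := Finset.sum_singleton _ _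
      calc ∑ s ∈ (I.filter (fun s => ¬ s < q)).filter (fun s => q < s), v q s +
            ∑ s ∈ (I.filter (fun s => ¬ s < q)).filter (fun s => ¬ q < s), v q s
          ≤ ∑ s ∈ Finset.Icc (q+1) M, v q s + v q q := add_le_add ha hb
      _ = v q q + ∑ s ∈ Finset.Icc (q+1) M, v q s := add_comm _ _
    calc ∑ s ∈ I.filter (fun s => s < q), v q s + ∑ s ∈ I.filter (fun s => ¬ s < q), v q s
        ≤ ∑ s ∈ I.filter (fun s => s < q), v q s +
          (v q q + ∑ s ∈ Finset.Icc (q+1) M, v q s) := add_le_add_right h2 _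
    _ = v q q + (∑ s ∈ I.filter (fun s => s < q), v q s + ∑ s ∈ Finset.Icc (q+1) M, v q s) := by
        ring
  have hswap : ∑ q ∈ I, ∑ s ∈ I.filter (fun s => s < q), v q s ≤
      ∑ q ∈ I, ∑ s ∈ Finset.Icc (q+1) M, v q s := by
    have hcomm : ∑ q ∈ I, ∑ s ∈ I.filter (fun s => s < q), v q s =
        ∑ s ∈ I, ∑ q ∈ I.filter (fun q => s < q), v q s := by
      apply Finset.sum_comm'
      intro q s
      simp only [Finset.mem_filter]
      tauto
    rw [hcomm]
    apply Finset.sum_le_sum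
    intro s hs
    calc ∑ q ∈ I.filter (fun q => s < q), v q s = ∑ q ∈ I.filter (fun q => s < q), v s q := by
          apply Finset.sum_congr rfl; intro q _; exact hsym q s
    _ ≤ ∑ q ∈ Finset.Icc (s+1) M, v s q := by
        apply Finset.sum_le_sum_of_subset
        intro a ha
        simp only [Finset.mem_filter, Finset.mem_Icc, hI] at ha ⊢
        omega
  have hdiag : ∑ q ∈ I, v q q ≤ ENNReal.ofReal (4 * ∑ r ∈ Finset.Icc N M, ψ r) := by
    calc ∑ q ∈ I, v q q ≤ ∑ q ∈ I, ENNReal.ofReal (4 * ψ q) := by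
          apply Finset.sum_le_sum
          intro q _
          rw [hv]; simp only
          rw [inter_self]
          exact Bset_vol_le x hi hj hij hψpos q
    _ = ENNReal.ofReal (∑ q ∈ I, 4 * ψ q) := by
        rw [ENNReal.ofReal_sum_of_nonneg]
        intro t _; linarith [(hψpos t).le, hψpos t]
    _ = ENNReal.ofReal (4 * ∑ r ∈ Finset.Icc N M, ψ r) := by rw [← Finset.mul_sum, hI]
  have hoff : ∑ q ∈ I, ∑ s ∈ Finset.Icc (q+1) M, v q s ≤
      ENNReal.ofReal ((8 * Aconst i j / c) * (∑ r ∈ Finset.Icc N M, ψ r) *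
        (∑ r ∈ Finset.Icc 1 M, ψ r)) := by
    calc ∑ q ∈ I, ∑ s ∈ Finset.Icc (q+1) M, v q s
        ≤ ∑ q ∈ I, ENNReal.ofReal ((8 * Aconst i j / c) * ψ q * ∑ r ∈ Finset.Icc 1 M, ψ r) :=
          Finset.sum_le_sum (fun q _ => sumq hi hj hij hc hbad hψpos hψmono q M)
    _ = ENNReal.ofReal (∑ q ∈ I, (8 * Aconst i j / c) * ψ q * ∑ r ∈ Finset.Icc 1 M, ψ r) := by
        rw [ENNReal.ofReal_sum_of_nonneg]
        intro t _
        have hA := (Aconst_pos hi hj).le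
        have h8 : 0 ≤ 8 * Aconst i j / c := by positivity
        have := (hψpos t).le
        have hS : 0 ≤ ∑ r ∈ Finset.Icc 1 M, ψ r := Finset.sum_nonneg fun r _ => (hψpos r).le
        positivity
    _ = ENNReal.ofReal ((8 * Aconst i j / c) * (∑ r ∈ Finset.Icc N M, ψ r) *
          (∑ r ∈ Finset.Icc 1 M, ψ r)) := by
        congr 1
        rw [← Finset.sum_mul, ← Finset.mul_sum]
  calc ∑ q ∈ I, ∑ s ∈ I, v q s
      ≤ ∑ q ∈ I, (v q q + (∑ s ∈ I.filter (fun s => s < q), v q s +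
          ∑ s ∈ Finset.Icc (q+1) M, v q s)) := Finset.sum_le_sum hsplit
  _ = ∑ q ∈ I, v q q + (∑ q ∈ I, ∑ s ∈ I.filter (fun s => s < q), v q s +
        ∑ q ∈ I, ∑ s ∈ Finset.Icc (q+1) M, v q s) := by
      rw [Finset.sum_add_distrib, Finset.sum_add_distrib]
  _ ≤ ENNReal.ofReal (4 * ∑ r ∈ Finset.Icc N M, ψ r) +
      (ENNReal.ofReal ((8 * Aconst i j / c) * (∑ r ∈ Finset.Icc N M, ψ r) *
          (∑ r ∈ Finset.Icc 1 M, ψ r)) +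
        ENNReal.ofReal ((8 * Aconst i j / c) * (∑ r ∈ Finset.Icc N M, ψ r) *
          (∑ r ∈ Finset.Icc 1 M, ψ r))) := by
      apply add_le_add hdiag
      apply add_le_add (le_trans hswap hoff) hoff
  _ = ENNReal.ofReal (4 * ∑ r ∈ Finset.Icc N M, ψ r) +
      ENNReal.ofReal ((16 * Aconst i j / c) * (∑ r ∈ Finset.Icc N M, ψ r) *
        (∑ r ∈ Finset.Icc 1 M, ψ r)) := by
      rw [← ENNReal.ofReal_add]
      · congr 1
        ring
      all_goals {
        have hA := (Aconst_pos hi hj).le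
        have hS : 0 ≤ ∑ r ∈ Finset.Icc 1 M, ψ r := Finset.sum_nonneg fun r _ => (hψpos r).le
        have hS2 : 0 ≤ ∑ r ∈ Finset.Icc N M, ψ r := Finset.sum_nonneg fun r _ => (hψpos r).le
        positivity
      }
lemma chung_erdos {X : Type*} [MeasurableSpace X] (μ : Measure X) {ι : Type*}
    (F : Finset ι) (A : ι → Set X) (hA : ∀ q, MeasurableSet (A q)) :
    (∑ q ∈ F, μ (A q)) ^ 2 ≤ μ (⋃ q ∈ F, A q) * ∑ q ∈ F, ∑ s ∈ F, μ (A q ∩ A s) := by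
  classical
  set f : X → ℝ≥0∞ := fun x => ∑ q ∈ F, (A q).indicator 1 x with hf
  have hfm : Measurable f := by
    apply Finset.measurable_sum
    intro q _
    exact (measurable_one).indicator (hA q)
  have hU : MeasurableSet (⋃ q ∈ F, A q) := by
    exact MeasurableSet.biUnion F.countable_toSet (fun q _ => hA q)
  have h1 : ∫⁻ x, f x ∂μ = ∑ q ∈ F, μ (A q) := by
    rw [lintegral_finset_sum _ (fun q _ => (measurable_one).indicator (hA q))]
    exact Finset.sum_congr rfl fun q _ => lintegral_indicator_one (hA q)
  have h2 : ∫⁻ x, (f x) ^ (2:ℝ) ∂μ = ∑ q ∈ F, ∑ s ∈ F, μ (A q ∩ A s) := by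
    have : ∀ x, (f x) ^ (2:ℝ) = ∑ q ∈ F, ∑ s ∈ F, ((A q ∩ A s).indicator 1 x) := by
      intro x
      rw [ENNReal.rpow_two, sq, hf]
      simp only [Finset.sum_mul_sum]
      refine Finset.sum_congr rfl fun q _ => Finset.sum_congr rfl fun s _ => ?_
      rw [inter_indicator_one]
      rfl
    simp_rw [this]
    rw [lintegral_finset_sum _ (fun q _ => by
      exact Finset.measurable_sum _ (fun s _ => (measurable_one).indicator ((hA q).inter (hA s))))]
    refine Finset.sum_congr rfl fun q _ => ?_
    rw [lintegral_finset_sum _ (fun s _ => (measurable_one).indicator ((hA q).inter (hA s)))]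
    exact Finset.sum_congr rfl fun s _ => lintegral_indicator_one ((hA q).inter (hA s))
  -- f = f * indicator of union
  have hsupp : ∀ x, f x = f x * (⋃ q ∈ F, A q).indicator 1 x := by
    intro x
    by_cases hx : x ∈ ⋃ q ∈ F, A q
    · rw [indicator_of_mem hx, Pi.one_apply, mul_one]
    · have : f x = 0 := by
        rw [hf]
        refine Finset.sum_eq_zero fun q hq => ?_
        apply indicator_of_notMem
        exact fun hxq => hx (mem_biUnion hq hxq)
      rw [this, zero_mul]
  have hCS : ∫⁻ x, f x ∂μ ≤ (∫⁻ x, (f x) ^ (2:ℝ) ∂μ) ^ (1/2:ℝ) *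
      (∫⁻ x, ((⋃ q ∈ F, A q).indicator (1 : X → ℝ≥0∞) x) ^ (2:ℝ) ∂μ) ^ (1/2:ℝ) := by
    calc ∫⁻ x, f x ∂μ = ∫⁻ x, f x * (⋃ q ∈ F, A q).indicator 1 x ∂μ := by
          exact lintegral_congr hsupp
    _ ≤ _ := ENNReal.lintegral_mul_le_Lp_mul_Lq μ (show Real.HolderConjugate 2 2 from Real.HolderConjugate.two_two) hfm.aemeasurable
          ((measurable_one.indicator hU).aemeasurable)
  have hIndSq : ∫⁻ x, ((⋃ q ∈ F, A q).indicator (1 : X → ℝ≥0∞) x) ^ (2:ℝ) ∂μ = μ (⋃ q ∈ F, A q) := by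
    have : ∀ x, ((⋃ q ∈ F, A q).indicator (1 : X → ℝ≥0∞) x) ^ (2:ℝ) = (⋃ q ∈ F, A q).indicator 1 x := by
      intro x
      by_cases hx : x ∈ ⋃ q ∈ F, A q <;>
        simp [indicator_of_mem, indicator_of_notMem, hx, ENNReal.rpow_two]
    simp_rw [this]
    exact lintegral_indicator_one hU
  rw [hIndSq] at hCS
  have := pow_le_pow_left' hCS 2
  rw [h1] at this
  calc (∑ q ∈ F, μ (A q))^2 ≤ ((∫⁻ x, (f x) ^ (2:ℝ) ∂μ) ^ (1/2:ℝ) *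
      (μ (⋃ q ∈ F, A q)) ^ (1/2:ℝ))^2 := this
  _ = μ (⋃ q ∈ F, A q) * ∑ q ∈ F, ∑ s ∈ F, μ (A q ∩ A s) := by
      rw [mul_pow, ← ENNReal.rpow_natCast (_ ^ (1/2:ℝ)), ← ENNReal.rpow_natCast ((μ _) ^ (1/2:ℝ)),
        ← ENNReal.rpow_mul, ← ENNReal.rpow_mul, h2,
        show ((1/2:ℝ)*(2:ℕ)) = 1 by push_cast; norm_num, ENNReal.rpow_one, ENNReal.rpow_one,
        mul_comm]

lemma tail_union {i j : ℝ} (hi : 0 < i) (hj : 0 < j) (hij : i + j = 1)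
    {x : ℝ × ℝ} {c : ℝ} (hc : 0 < c)
    (hbad : ∀ q : ℕ, 0 < q →
      c / q < max (pw (nint (q * x.1)) i) (pw (nint (q * x.2)) j))
    {ψ : ℕ → ℝ} (hψpos : ∀ r, 0 < ψ r) (hψmono : Antitone ψ) (hψ1 : ∀ r, ψ r ≤ 1)
    (hψdiv : ¬ Summable ψ) (N : ℕ) :
    ENNReal.ofReal (c / (32 * Aconst i j)) ≤ volume (⋃ q ∈ Set.Ici N, Bset x i j ψ q) := by
  classical
  have hA := Aconst_pos hi hj
  set K : ℝ := 16 * Aconst i j / c with hK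
  have hKpos : 0 < K := by positivity
  set H : ℝ := ∑ r ∈ Finset.Ico 1 N, ψ r with hH
  have hHnn : 0 ≤ H := Finset.sum_nonneg fun r _ => (hψpos r).le
  -- choose M with big tail sum
  have hdivergent : Tendsto (fun n => ∑ r ∈ Finset.range n, ψ r) atTop atTop :=
    (not_summable_iff_tendsto_nat_atTop_of_nonneg (fun r => (hψpos r).le)).1 hψdiv
  obtain ⟨n₀, hn₀⟩ : ∃ n₀, max (N + 1) 1 ≤ n₀ ∧
      (4 / K + H) + ∑ r ∈ Finset.range N, ψ r ≤ ∑ r ∈ Finset.range n₀, ψ r := by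
    obtain ⟨n₁, hn₁⟩ := (tendsto_atTop.1 hdivergent ((4 / K + H) + ∑ r ∈ Finset.range N, ψ r)).exists_forall_of_atTop
    exact ⟨max n₁ (max (N+1) 1), le_max_right _ _, hn₁ _ (le_max_left _ _)⟩
  set M : ℕ := n₀ - 1 with hM
  have hNM : N ≤ M + 1 := by omega
  have hM1 : M + 1 = n₀ := by omega
  set S : ℝ := ∑ r ∈ Finset.Icc N M, ψ r with hS
  have hSnn : 0 ≤ S := Finset.sum_nonneg fun r _ => (hψpos r).le
  have hSbig : 4 / K + H ≤ S := by
    have : Finset.Icc N M = Finset.Ico N (M+1) := by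
      rw [Finset.Ico_add_one_right_eq_Icc]
    rw [hS, this, Finset.sum_Ico_eq_sub _ hNM, hM1]
    linarith [hn₀.2]
  have hSpos : 0 < S := lt_of_lt_of_le (by positivity) hSbig
  -- total sum over Icc 1 M
  have hsum1M : ∑ r ∈ Finset.Icc 1 M, ψ r ≤ H + S := by
    rcases Nat.eq_zero_or_pos N with hN0 | h1N
    · have hH0 : H = 0 := by
        rw [hH, hN0]
        simp
      have hsub : Finset.Icc 1 M ⊆ Finset.Icc N M := by
        apply Finset.Icc_subset_Icc_left
        omega
      rw [hH0, zero_add, hS]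
      exact Finset.sum_le_sum_of_subset_of_nonneg hsub (fun r _ _ => (hψpos r).le)
    · have hcons := Finset.sum_Ico_consecutive ψ h1N hNM
      rw [← Finset.Ico_add_one_right_eq_Icc]
      rw [← hcons, hH, hS, ← Finset.Ico_add_one_right_eq_Icc]
  -- apply Chung-Erdos
  set B : ℕ → Set (UnitAddCircle × UnitAddCircle) := Bset x i j ψ with hB
  have hCE := chung_erdos volume (Finset.Icc N M) B (Bset_meas x i j ψ)
  have hSle : ENNReal.ofReal S ≤ ∑ q ∈ Finset.Icc N M, volume (B q) := by
    rw [hS, ENNReal.ofReal_sum_of_nonneg (fun r _ => (hψpos r).le)]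
    exact Finset.sum_le_sum (fun q _ => Bset_vol_ge x hi hj hij hψpos hψ1 q)
  set Dr : ℝ := S * (4 + K * (H + S)) with hDr
  have hDrpos : 0 < Dr := by
    rw [hDr]
    have : 0 < 4 + K * (H + S) := by positivity
    positivity
  have hDle : ∑ q ∈ Finset.Icc N M, ∑ s ∈ Finset.Icc N M, volume (B q ∩ B s) ≤
      ENNReal.ofReal Dr := by
    calc ∑ q ∈ Finset.Icc N M, ∑ s ∈ Finset.Icc N M, volume (B q ∩ B s)
        ≤ ENNReal.ofReal (4 * ∑ r ∈ Finset.Icc N M, ψ r) +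
          ENNReal.ofReal ((16 * Aconst i j / c) * (∑ r ∈ Finset.Icc N M, ψ r) *
            (∑ r ∈ Finset.Icc 1 M, ψ r)) := dsum hi hj hij hc hbad hψpos hψmono N M
    _ ≤ ENNReal.ofReal (4 * S) + ENNReal.ofReal (K * S * (H + S)) := by
        apply add_le_add
        · apply ENNReal.ofReal_le_ofReal
          rw [hS]
        · apply ENNReal.ofReal_le_ofReal
          rw [← hK, ← hS]
          apply mul_le_mul_of_nonneg_left hsum1M (by positivity)
    _ = ENNReal.ofReal Dr := by
        rw [← ENNReal.ofReal_add (by linarith) (by positivity), hDr]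
        congr 1
        ring
  have hU : ENNReal.ofReal (S^2) ≤ volume (⋃ q ∈ Finset.Icc N M, B q) * ENNReal.ofReal Dr := by
    calc ENNReal.ofReal (S^2) = (ENNReal.ofReal S)^2 := by
          rw [ENNReal.ofReal_pow hSnn]
    _ ≤ (∑ q ∈ Finset.Icc N M, volume (B q))^2 := pow_le_pow_left' hSle 2
    _ ≤ volume (⋃ q ∈ Finset.Icc N M, B q) *
          ∑ q ∈ Finset.Icc N M, ∑ s ∈ Finset.Icc N M, volume (B q ∩ B s) := hCE
    _ ≤ volume (⋃ q ∈ Finset.Icc N M, B q) * ENNReal.ofReal Dr :=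
        mul_le_mul_right hDle _
  have hUdiv : ENNReal.ofReal (S^2 / Dr) ≤ volume (⋃ q ∈ Finset.Icc N M, B q) := by
    rw [ENNReal.ofReal_div_of_pos hDrpos]
    exact ENNReal.div_le_of_le_mul hU
  have hratio : c / (32 * Aconst i j) ≤ S^2 / Dr := by
    have hc32 : c / (32 * Aconst i j) = 1 / (2 * K) := by
      have h2K : 2 * K = 32 * Aconst i j / c := by rw [hK]; ring
      rw [h2K, one_div_div]
    rw [hc32, hDr, div_le_div_iff₀ (by positivity) hDrpos]
    have hKS : 4 + K * H ≤ K * S := by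
      have := mul_le_mul_of_nonneg_left hSbig hKpos.le
      rw [mul_add] at this
      have h4 : K * (4 / K) = 4 := by field_simp
      linarith [this, h4.symm.le]
    nlinarith [hSpos, hKpos, hSnn, hHnn]
  calc ENNReal.ofReal (c / (32 * Aconst i j)) ≤ ENNReal.ofReal (S^2 / Dr) :=
        ENNReal.ofReal_le_ofReal hratio
  _ ≤ volume (⋃ q ∈ Finset.Icc N M, B q) := hUdiv
  _ ≤ volume (⋃ q ∈ Set.Ici N, B q) := by
      apply measure_mono
      apply Set.iUnion₂_subset
      intro q hq
      rw [Finset.mem_Icc] at hq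
      exact Set.subset_iUnion₂ (s := fun q _ => B q) q (Set.mem_Ici.2 hq.1)

lemma mem_twisted {i j : ℝ} (hi : 0 < i) (hj : 0 < j) {x : ℝ × ℝ} {ψ : ℕ → ℝ}
    (hψpos : ∀ r, 0 < ψ r) {γ : ℝ × ℝ}
    (hγ : γ ∈ Set.Ioc (0:ℝ) 1 ×ˢ Set.Ioc (0:ℝ) 1)
    (hL : ∀ N : ℕ, ∃ q : ℕ, N + 1 ≤ q ∧
      ((γ.1 : UnitAddCircle), (γ.2 : UnitAddCircle)) ∈ Bset x i j ψ q) :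
    γ ∈ twistedW x i j ψ := by
  rw [Set.mem_prod, Set.mem_Ioc, Set.mem_Ioc] at hγ
  constructor
  · rw [Set.mem_Icc]
    constructor
    · rw [Prod.le_def]
      exact ⟨hγ.1.1.le, hγ.2.1.le⟩
    · rw [Prod.le_def]
      exact ⟨hγ.1.2, hγ.2.2⟩
  · -- infinitude
    have hT : ∀ N : ℕ, ∃ q : ℕ, N + 1 ≤ q ∧ ((q:ℤ) ≠ 0 ∧
        max (pw (nint (((q:ℤ):ℝ) * x.1 - γ.1)) i) (pw (nint (((q:ℤ):ℝ) * x.2 - γ.2)) j)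
          ≤ ψ ((q:ℤ)).natAbs) := by
      intro N
      obtain ⟨q, hq1, hq2⟩ := hL N
      rw [Bset, Set.mem_prod] at hq2
      refine ⟨q, hq1, ?_, ?_⟩
      · have : q ≠ 0 := by omega
        exact_mod_cast this
      · have hdist : ∀ (y z : ℝ) (e : ℝ), 0 < e →
            (z : UnitAddCircle) ∈ Metric.closedBall ((q * y : ℝ) : UnitAddCircle) (ψ q ^ e) →
            pw (nint ((q : ℝ) * y - z)) e ≤ ψ q := by
          intro y z e he hball
          have h1 : nint ((q:ℝ) * y - z) ≤ ψ q ^ e := by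
            rw [nint_eq_norm, AddCircle.coe_sub, ← dist_eq_norm]
            rw [Metric.mem_closedBall, dist_comm] at hball
            exact hball
          rw [pw, if_neg he.ne']
          calc (nint ((q:ℝ) * y - z)) ^ (1/e) ≤ (ψ q ^ e) ^ (1/e) :=
                Real.rpow_le_rpow (nint_nonneg _) h1 (by positivity)
          _ = ψ q := by
              rw [← Real.rpow_mul (hψpos q).le, mul_one_div_cancel he.ne', Real.rpow_one]
        have h1 := hdist x.1 γ.1 i hi hq2.1
        have h2 := hdist x.2 γ.2 j hj hq2.2
        rw [Int.natAbs_natCast]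
        push_cast
        exact max_le h1 h2
    set SZ : Set ℤ := {q : ℤ | q ≠ 0 ∧
        max (pw (nint (q * x.1 - γ.1)) i) (pw (nint (q * x.2 - γ.2)) j)
          ≤ ψ q.natAbs} with hSZ
    show SZ.Infinite
    set T : Set ℕ := {qn : ℕ | (qn : ℤ) ∈ SZ} with hTdef
    have hTinf : T.Infinite := by
      apply Set.infinite_of_not_bddAbove
      rintro ⟨b, hb⟩
      obtain ⟨q, hq1, hq2⟩ := hT b
      have hqT : q ∈ T := by
        rw [hTdef]
        exact hq2
      have := hb hqT
      omega
    have himg : (fun n : ℕ => (n : ℤ)) '' T ⊆ SZ := by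
      rintro _ ⟨n, hn, rfl⟩
      exact hn
    exact Set.Infinite.mono himg (hTinf.image (Set.injOn_of_injective (fun a b => by
      exact_mod_cast fun h => h)))

lemma core {i j : ℝ} (hi : 0 < i) (hj : 0 < j) (hij : i + j = 1)
    {x : ℝ × ℝ} {c : ℝ} (hc : 0 < c)
    (hbad : ∀ q : ℕ, 0 < q →
      c / q < max (pw (nint (q * x.1)) i) (pw (nint (q * x.2)) j))
    {ψ : ℕ → ℝ} (hψpos : ∀ r, 0 < ψ r) (hψmono : Antitone ψ) (hψ1 : ∀ r, ψ r ≤ 1)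
    (hψdiv : ¬ Summable ψ) :
    ENNReal.ofReal (c / (32 * Aconst i j)) ≤ volume (twistedW x i j ψ) := by
  classical
  set B : ℕ → Set (UnitAddCircle × UnitAddCircle) := Bset x i j ψ with hB
  set L : Set (UnitAddCircle × UnitAddCircle) := ⋂ N : ℕ, ⋃ q ∈ Set.Ici (N+1), B q with hL
  have hmeasN : ∀ N : ℕ, MeasurableSet (⋃ q ∈ Set.Ici (N+1), B q) := fun N =>
    MeasurableSet.biUnion (Set.to_countable _) (fun q _ => Bset_meas x i j ψ q)
  have hLmeas : MeasurableSet L := MeasurableSet.iInter hmeasN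
  have hmono : Antitone (fun N : ℕ => ⋃ q ∈ Set.Ici (N+1), B q) := by
    intro N N' hNN'
    apply Set.iUnion₂_subset
    intro q hq
    exact Set.subset_iUnion₂ (s := fun q _ => B q) q (Set.mem_Ici.2 (le_trans (by omega) hq))
  have htend := tendsto_measure_iInter_atTop (μ := volume)
    (fun N => (hmeasN N).nullMeasurableSet) hmono ⟨0, measure_ne_top _ _⟩
  have hLvol : ENNReal.ofReal (c / (32 * Aconst i j)) ≤ volume L := by
    apply ge_of_tendsto htend
    apply Filter.Eventually.of_forall
    intro N
    exact tail_union hi hj hij hc hbad hψpos hψmono hψ1 hψdiv (N+1)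
  -- measure preserving transfer
  have h1 : MeasurePreserving ((↑) : ℝ → UnitAddCircle) (volume.restrict (Set.Ioc 0 1)) volume := by
    have := UnitAddCircle.measurePreserving_mk 0
    rwa [zero_add] at this
  have hmp : MeasurePreserving (fun γ : ℝ × ℝ => ((γ.1 : UnitAddCircle), (γ.2 : UnitAddCircle)))
      (volume.restrict (Set.Ioc (0:ℝ) 1 ×ˢ Set.Ioc (0:ℝ) 1)) volume := by
    have h2 := h1.prod h1
    rw [Measure.prod_restrict] at h2
    rw [← Measure.volume_eq_prod, ← Measure.volume_eq_prod] at h2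
    exact h2
  have hpre : volume ((Set.Ioc (0:ℝ) 1 ×ˢ Set.Ioc (0:ℝ) 1) ∩
      (fun γ : ℝ × ℝ => ((γ.1 : UnitAddCircle), (γ.2 : UnitAddCircle))) ⁻¹' L) = volume L := by
    rw [Set.inter_comm, ← Measure.restrict_apply (hmp.measurable hLmeas)]
    exact hmp.measure_preimage hLmeas.nullMeasurableSet
  have hsub : (Set.Ioc (0:ℝ) 1 ×ˢ Set.Ioc (0:ℝ) 1) ∩
      (fun γ : ℝ × ℝ => ((γ.1 : UnitAddCircle), (γ.2 : UnitAddCircle))) ⁻¹' L ⊆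
      twistedW x i j ψ := by
    rintro γ ⟨hγ1, hγ2⟩
    apply mem_twisted hi hj hψpos hγ1
    intro N
    rw [Set.mem_preimage, hL, Set.mem_iInter] at hγ2
    have := hγ2 N
    rw [Set.mem_iUnion₂] at this
    obtain ⟨q, hq, hmem⟩ := this
    exact ⟨q, Set.mem_Ici.1 hq, hmem⟩
  calc ENNReal.ofReal (c / (32 * Aconst i j)) ≤ volume L := hLvol
  _ = volume ((Set.Ioc (0:ℝ) 1 ×ˢ Set.Ioc (0:ℝ) 1) ∩
      (fun γ : ℝ × ℝ => ((γ.1 : UnitAddCircle), (γ.2 : UnitAddCircle))) ⁻¹' L) := hpre.symm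
  _ ≤ volume (twistedW x i j ψ) := measure_mono hsub


theorem stmt10 (i j : ℝ) (hi : 0 < i) (hj : 0 < j) (hij : i + j = 1)
    (x : ℝ × ℝ) (hx : Badij i j x) :
    ∃ κ : ENNReal, 0 < κ ∧ ∀ ψ : ℕ → ℝ, (∀ r, 0 < ψ r) → Antitone ψ →
      ¬ Summable ψ → κ ≤ volume (twistedW x i j ψ) := by
  obtain ⟨hirr, c, hc, hbad⟩ := hx
  refine ⟨ENNReal.ofReal (c / (32 * Aconst i j)), ?_, ?_⟩
  · rw [ENNReal.ofReal_pos]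
    have hA := Aconst_pos hi hj
    positivity
  · intro ψ hψpos hψmono hψdiv
    set ψ' : ℕ → ℝ := fun r => min (ψ r) 1 with hψ'
    have hψ'pos : ∀ r, 0 < ψ' r := fun r => lt_min (hψpos r) one_pos
    have hψ'mono : Antitone ψ' := fun a b hab => min_le_min (hψmono hab) le_rfl
    have hψ'1 : ∀ r, ψ' r ≤ 1 := fun r => min_le_right _ _
    have hψ'div : ¬ Summable ψ' := by
      intro hsum
      apply hψdiv
      have h0 : Tendsto ψ' atTop (nhds 0) := hsum.tendsto_atTop_zero
      have hev : ∀ᶠ r in atTop, ψ' r < 1 := h0.eventually_lt_const one_pos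
      obtain ⟨R, hR⟩ := Filter.eventually_atTop.1 hev
      have heq : ∀ r, r ≥ R → ψ' r = ψ r := by
        intro r hr
        have hlt : ψ r < 1 := by
          by_contra hcon
          push_neg at hcon
          have h1' : ψ' r = 1 := min_eq_right hcon
          have hlt1 := hR r hr
          rw [h1'] at hlt1
          exact lt_irrefl 1 hlt1
        exact min_eq_left hlt.le
      have h1 : Summable (fun n => ψ' (n + R)) := (summable_nat_add_iff R).2 hsum
      have h2 : Summable (fun n => ψ (n + R)) := h1.congr (fun n => heq (n+R) (by omega))
      exact (summable_nat_add_iff R).1 h2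
    have hle := core hi hj hij hc hbad hψ'pos hψ'mono hψ'1 hψ'div
    refine le_trans hle (measure_mono ?_)
    intro γ hγ
    obtain ⟨hIcc, hinf⟩ := hγ
    refine ⟨hIcc, Set.Infinite.mono ?_ hinf⟩
    intro q hq
    exact ⟨hq.1, le_trans hq.2 (min_le_left _ _)⟩
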